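/- Under the Haagerup-type condition with constant C, there is a constant C' = 2C(Σ_{p≥1} p^{−2})^{1/2} such that for every a ∈ A, ‖a‖ ≤ C' (Σ_k (1+k)^4 ‖a_k‖₂²)^{1/2}. -/

import Mathlib

variable {A : Type*} [Ring A] [Algebra ℂ A] [StarRing A]

/-- The `L²`-norm of `x ∈ A` coming from the state `σ`: `‖x‖₂ = √(σ(x*x))`. -/
noncomputable def l2norm (σ : A →ₗ[ℂ] ℂ) (x : A) : ℝ := Real.sqrt (σ (star x * x)).re

/-- The successive orthogonal differences of the filtration `F`, computed inside `A`
with respect to the `σ`-inner product `⟨x, y⟩ = σ(x* y)`: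
`E 0 = A_0` and `E (n+1) = A_{n+1} ⊖ A_n`. -/
def Ediff (σ : A →ₗ[ℂ] ℂ) (F : ℕ → Submodule ℂ A) : ℕ → Set A
  | 0 => F 0
  | (n + 1) => {x | x ∈ F (n + 1) ∧ ∀ y ∈ F n, σ (star y * x) = 0}

/-- `P` is the family of orthogonal projections of `A` (with its `σ`-inner product)
onto the successive differences `Ediff σ F n` of the filtration `F`:
each `P n` has range in `E_n`, fixes `E_n`, kills `E_m` for `m ≠ n`, and
every element of `A_N` is the sum of its components `P 0 x, …, P N x`. -/
def IsProjFamily (σ : A →ₗ[ℂ] ℂ) (F : ℕ → Submodule ℂ A) (P : ℕ → A →ₗ[ℂ] A) : Prop :=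
  (∀ n x, P n x ∈ Ediff σ F n) ∧
  (∀ n, ∀ x ∈ Ediff σ F n, P n x = x) ∧
  (∀ m n : ℕ, m ≠ n → ∀ x ∈ Ediff σ F m, P n x = 0) ∧
  (∀ N : ℕ, ∀ x ∈ F N, x = ∑ n ∈ Finset.range (N + 1), P n x)

/-- `(A, σ, F)` is a *-filtration of the unital *-algebra `A` by finite-dimensional
subspaces, with `A_0 = ℂ1`, and `σ` is a faithful tracial state on `A`. -/
def IsFilteredStarAlgWithState (σ : A →ₗ[ℂ] ℂ) (F : ℕ → Submodule ℂ A) : Prop :=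
  Monotone F ∧
  (∀ a : A, ∃ n, a ∈ F n) ∧
  (∀ n, ∀ a ∈ F n, star a ∈ F n) ∧
  (∀ m n : ℕ, ∀ a ∈ F m, ∀ b ∈ F n, a * b ∈ F (m + n)) ∧
  (F 0 = Submodule.span ℂ {1}) ∧
  (∀ n, FiniteDimensional ℂ (F n)) ∧
  σ 1 = 1 ∧
  (∀ a : A, a ≠ 0 → 0 < (σ (star a * a)).re ∧ (σ (star a * a)).im = 0) ∧
  (∀ a b : A, σ (a * b) = σ (b * a))

/-- The Haagerup-type condition with constant `C`: `‖P_m a_k P_n‖ ≤ C ‖a_k‖₂`,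
expressed concretely: for every `a ∈ E_k` and every `ξ ∈ E_n`,
`‖P_m (a ξ)‖₂ ≤ C ‖a‖₂ ‖ξ‖₂`. -/
def HaagerupTypeCond (σ : A →ₗ[ℂ] ℂ) (F : ℕ → Submodule ℂ A) (P : ℕ → A →ₗ[ℂ] A)
    (C : ℝ) : Prop :=
  ∀ k m n : ℕ, ∀ a ∈ Ediff σ F k, ∀ ξ ∈ Ediff σ F n,
    l2norm σ (P m (a * ξ)) ≤ C * l2norm σ a * l2norm σ ξ


namespace Haag5

variable {σ : A →ₗ[ℂ] ℂ} {F : ℕ → Submodule ℂ A} {P : ℕ → A →ₗ[ℂ] A}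

lemma qnn (hfa : ∀ a : A, a ≠ 0 → 0 < (σ (star a * a)).re ∧ (σ (star a * a)).im = 0)
    (x : A) : 0 ≤ (σ (star x * x)).re := by
  by_cases hx : x = 0
  · simp [hx]
  · exact (hfa x hx).1.le

lemma qim (hfa : ∀ a : A, a ≠ 0 → 0 < (σ (star a * a)).re ∧ (σ (star a * a)).im = 0)
    (x : A) : (σ (star x * x)).im = 0 := by
  by_cases hx : x = 0
  · simp [hx]
  · exact (hfa x hx).2

lemma starI (hσ1 : σ (1:A) = 1)
    (hfa : ∀ a : A, a ≠ 0 → 0 < (σ (star a * a)).re ∧ (σ (star a * a)).im = 0) :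
    star (algebraMap ℂ A Complex.I) = - algebraMap ℂ A Complex.I := by
  set t : A := algebraMap ℂ A Complex.I with ht
  set s : A := star t with hs
  have ht2 : t * t = -1 := by
    rw [ht, ← map_mul, Complex.I_mul_I, map_neg, map_one]
  have hcent : ∀ x : A, t * x = x * t := fun x => (Algebra.commutes Complex.I x)
  have hscent : ∀ x : A, s * x = x * s := by
    intro x
    have h := congrArg star (hcent (star x))
    rw [star_mul, star_mul, star_star] at h
    exact h.symm
  have hs2 : s * s = -1 := by rw [hs, ← star_mul, ht2, star_neg, star_one]
  set h : A := s + t with hh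
  have hsh : star h = h := by rw [hh, star_add, ← hs, star_star, add_comm]
  have hhc : ∀ x : A, h * x = x * h := by
    intro x
    rw [hh, add_mul, mul_add, hscent, hcent]
  have e1 : h * h = s * t + s * t - (1+1) := by
    have e : h * h = s*s + s*t + t*s + t*t := by rw [hh]; noncomm_ring
    rw [e, hcent s, hs2, ht2]; noncomm_ring
  have hst2 : (s*t)*(s*t) = 1 := by
    calc s*t*(s*t) = s*(t*s)*t := by noncomm_ring
    _ = s*(s*t)*t := by rw [hcent s]
    _ = (s*s)*(t*t) := by noncomm_ring
    _ = 1 := by rw [hs2, ht2]; noncomm_ring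
  have e2 : star (t*h) * (t*h) = (1+1) - (s*t + s*t) := by
    have p1 : star (t*h) * (t*h) = (h*s)*(t*h) := by rw [star_mul, hsh, ← hs]
    have p2 : (h*s)*(t*h) = (s*t)*(h*h) := by
      calc (h*s)*(t*h) = (h*(s*t))*h := by noncomm_ring
      _ = ((s*t)*h)*h := by rw [hhc (s*t)]
      _ = (s*t)*(h*h) := by noncomm_ring
    rw [p1, p2, e1, mul_sub, mul_add, hst2]
    noncomm_ring
  -- now compare σ of star h * h and star (t*h) * (t*h)
  set c : ℂ := σ (s * t) with hc
  have q1 : (σ (star h * h)).re = c.re + c.re - 2 := by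
    rw [hsh, e1]
    have : σ (s*t + s*t - (1+1)) = c + c - 2 := by
      rw [map_sub, map_add, map_add, ← hc, hσ1]
      norm_num
    rw [this]
    simp
  have q2 : (σ (star (t*h) * (t*h))).re = 2 - (c.re + c.re) := by
    rw [e2]
    have : σ ((1+1) - (s*t + s*t)) = 2 - (c + c) := by
      rw [map_sub, map_add, map_add, ← hc, hσ1]
      norm_num
    rw [this]
    simp
  have h2nn := qnn hfa (t*h)
  rw [q2] at h2nn
  have hzero : h = 0 := by
    by_contra hne
    have := (hfa h hne).1
    rw [q1] at this
    linarith
  have hst : s + t = 0 := by rw [← hh]; exact hzero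
  exact eq_neg_of_add_eq_zero_left hst

lemma hermit (hσ1 : σ (1:A) = 1)
    (hfa : ∀ a : A, a ≠ 0 → 0 < (σ (star a * a)).re ∧ (σ (star a * a)).im = 0)
    (x y : A) : σ (star y * x) = (starRingEnd ℂ) (σ (star x * y)) := by
  have hstarI := starI hσ1 hfa
  have hsmul : ∀ z : A, star (Complex.I • z) = -(Complex.I • star z) := by
    intro z
    rw [Algebra.smul_def, star_mul, hstarI, mul_neg, ← Algebra.commutes, ← Algebra.smul_def]
  have him : ∀ x y : A, (σ (star x * y)).im + (σ (star y * x)).im = 0 := by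
    intro x y
    have h0 := qim hfa (x + y)
    have e : star (x+y) * (x+y) = star x * x + (star x * y + (star y * x + star y * y)) := by
      rw [star_add]; noncomm_ring
    rw [e, map_add, map_add, map_add] at h0
    simp only [Complex.add_im, qim hfa x, qim hfa y] at h0
    linarith
  have hre : ∀ x y : A, (σ (star x * y)).re = (σ (star y * x)).re := by
    intro x y
    have h1 := him x (Complex.I • y)
    have e1 : star x * (Complex.I • y) = Complex.I • (star x * y) := mul_smul_comm _ _ _
    have e2 : star (Complex.I • y) * x = -(Complex.I • (star y * x)) := by
      rw [hsmul, neg_mul, smul_mul_assoc]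
    rw [e1, e2, map_smul, map_neg, map_smul] at h1
    simp only [smul_eq_mul, Complex.neg_im, Complex.mul_im, Complex.I_re, Complex.I_im] at h1
    linarith
  apply Complex.ext
  · simp only [Complex.conj_re]
    exact (hre x y).symm
  · have := him x y
    simp only [Complex.conj_im]
    linarith

lemma ip_expand (hσ1 : σ (1:A) = 1)
    (hfa : ∀ a : A, a ≠ 0 → 0 < (σ (star a * a)).re ∧ (σ (star a * a)).im = 0)
    (x y : A) (c : ℂ) :
    0 ≤ (σ (star x * x)).re + 2*(c * σ (star x * y)).re
      + Complex.normSq c * (σ (star y * y)).re := by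
  have hH := hermit hσ1 hfa
  have h0 := qnn hfa (x + c • y)
  set u := x + c • y with hu
  have eu : ∀ v : A, σ (star v * u) = σ (star v * x) + c * σ (star v * y) := by
    intro v
    rw [hu, mul_add, map_add, mul_smul_comm, map_smul, smul_eq_mul]
  have e : σ (star u * u)
      = σ (star x * x) + (starRingEnd ℂ) c * (starRingEnd ℂ) (σ (star x * y))
        + c * σ (star x * y) + c * (starRingEnd ℂ) c * σ (star y * y) := by
    have h1 : σ (star u * u) = σ (star u * x) + c * σ (star u * y) := by
      have := eu u; linear_combination this
    have h2 : σ (star u * x) = (starRingEnd ℂ) (σ (star x * x))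
        + (starRingEnd ℂ) c * (starRingEnd ℂ) (σ (star x * y)) := by
      rw [hH x u, eu x, map_add]
      congr 1
      exact map_mul (starRingEnd ℂ) _ _
    have h3 : σ (star u * y) = (starRingEnd ℂ) (σ (star y * x))
        + (starRingEnd ℂ) c * (starRingEnd ℂ) (σ (star y * y)) := by
      rw [hH y u, eu y, map_add]
      congr 1
      exact map_mul (starRingEnd ℂ) _ _
    have h4 : (starRingEnd ℂ) (σ (star x * x)) = σ (star x * x) := (hH x x).symm
    have h5 : (starRingEnd ℂ) (σ (star y * x)) = σ (star x * y) := by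
      rw [hH y x]
    have h6 : (starRingEnd ℂ) (σ (star y * y)) = σ (star y * y) := (hH y y).symm
    rw [h1, h2, h3, h4, h5, h6]; ring
  rw [e] at h0
  simp only [Complex.add_re] at h0
  have r1 : ((starRingEnd ℂ) c * (starRingEnd ℂ) (σ (star x * y))).re
      = (c * σ (star x * y)).re := by
    rw [← map_mul]; exact Complex.conj_re _
  have r2 : (c * (starRingEnd ℂ) c * σ (star y * y)).re
      = Complex.normSq c * (σ (star y * y)).re := by
    rw [Complex.mul_conj]
    rw [Complex.re_ofReal_mul]
  rw [r1, r2] at h0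
  linarith

lemma ip_expand_real (hσ1 : σ (1:A) = 1)
    (hfa : ∀ a : A, a ≠ 0 → 0 < (σ (star a * a)).re ∧ (σ (star a * a)).im = 0)
    (x y : A) (r : ℝ) :
    0 ≤ (σ (star x * x)).re - 2*r*Complex.normSq (σ (star x * y))
      + r^2 * Complex.normSq (σ (star x * y)) * (σ (star y * y)).re := by
  set z := σ (star x * y) with hz
  have h := ip_expand hσ1 hfa x y (-(starRingEnd ℂ z) * (r:ℝ))
  have e1 : (-(starRingEnd ℂ) z * (r:ℂ) * z).re = -(r * Complex.normSq z) := by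
    have : -(starRingEnd ℂ) z * (r:ℂ) * z = -((r:ℂ) * ((Complex.normSq z : ℝ) : ℂ)) := by
      rw [Complex.normSq_eq_conj_mul_self]; ring
    rw [this]
    simp
  have e2 : Complex.normSq (-(starRingEnd ℂ) z * (r:ℂ)) = Complex.normSq z * r^2 := by
    rw [Complex.normSq_mul, Complex.normSq_neg, Complex.normSq_conj, Complex.normSq_ofReal]
    ring
  rw [← hz, e1, e2] at h
  nlinarith [h]

lemma cs_abs (hσ1 : σ (1:A) = 1)
    (hfa : ∀ a : A, a ≠ 0 → 0 < (σ (star a * a)).re ∧ (σ (star a * a)).im = 0)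
    (x y : A) : ‖σ (star x * y)‖ ≤ l2norm σ x * l2norm σ y := by
  set z := σ (star x * y) with hz
  by_cases hzz : z = 0
  · rw [hzz]
    simp only [norm_zero]
    exact mul_nonneg (Real.sqrt_nonneg _) (Real.sqrt_nonneg _)
  have hqx := qnn hfa x
  have hqy := qnn hfa y
  have hnsq : 0 < Complex.normSq z := Complex.normSq_pos.2 hzz
  have key : Complex.normSq z ≤ (σ (star x * x)).re * (σ (star y * y)).re := by
    rcases eq_or_lt_of_le hqy with hqy0 | hqy0
    · exfalso
      have h := ip_expand_real hσ1 hfa x y (((σ (star x * x)).re + 1) / Complex.normSq z)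
      rw [← hz, ← hqy0] at h
      have hcan : ((σ (star x * x)).re + 1) / Complex.normSq z * Complex.normSq z
          = (σ (star x * x)).re + 1 := div_mul_cancel₀ _ (ne_of_gt hnsq)
      nlinarith [h, hcan, hqx]
    · have h := ip_expand_real hσ1 hfa x y (((σ (star y * y)).re)⁻¹)
      rw [← hz] at h
      have h2 : ((σ (star y * y)).re)⁻¹ ^ 2 * Complex.normSq z * (σ (star y * y)).re
          = ((σ (star y * y)).re)⁻¹ * Complex.normSq z := by
        field_simp
      have h3 : 0 ≤ (σ (star x * x)).re - ((σ (star y * y)).re)⁻¹ * Complex.normSq z := by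
        nlinarith [h, h2]
      have h5 : ((σ (star y * y)).re)⁻¹ * Complex.normSq z * (σ (star y * y)).re
          = Complex.normSq z := by
        field_simp
      nlinarith [mul_nonneg h3 hqy0.le, h5]
  calc ‖z‖ = Real.sqrt (Complex.normSq z) := Complex.norm_def z
  _ ≤ Real.sqrt ((σ (star x * x)).re * (σ (star y * y)).re) := Real.sqrt_le_sqrt key
  _ = l2norm σ x * l2norm σ y := Real.sqrt_mul hqx _

lemma l2_nonneg (x : A) : 0 ≤ l2norm σ x := Real.sqrt_nonneg _

lemma l2_zero : l2norm σ (0:A) = 0 := by simp [l2norm]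

lemma l2_sq (hfa : ∀ a : A, a ≠ 0 → 0 < (σ (star a * a)).re ∧ (σ (star a * a)).im = 0)
    (x : A) : (l2norm σ x)^2 = (σ (star x * x)).re := Real.sq_sqrt (qnn hfa x)

lemma l2_add (hσ1 : σ (1:A) = 1)
    (hfa : ∀ a : A, a ≠ 0 → 0 < (σ (star a * a)).re ∧ (σ (star a * a)).im = 0)
    (x y : A) : l2norm σ (x + y) ≤ l2norm σ x + l2norm σ y := by
  have hH := hermit hσ1 hfa
  have e : star (x+y) * (x+y) = star x * x + (star x * y + (star y * x + star y * y)) := by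
    rw [star_add]; noncomm_ring
  have hq : (σ (star (x+y) * (x+y))).re
      = (σ (star x * x)).re + 2*(σ (star x * y)).re + (σ (star y * y)).re := by
    rw [e, map_add, map_add, map_add]
    simp only [Complex.add_re]
    have : (σ (star y * x)).re = (σ (star x * y)).re := by
      rw [hH x y]; exact Complex.conj_re _
    rw [this]; ring
  have hre : (σ (star x * y)).re ≤ l2norm σ x * l2norm σ y :=
    le_trans (Complex.re_le_norm _) (cs_abs hσ1 hfa x y)
  have hb : (σ (star (x+y) * (x+y))).re ≤ (l2norm σ x + l2norm σ y)^2 := by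
    rw [hq]
    have hx2 := l2_sq hfa x
    have hy2 := l2_sq hfa y
    nlinarith [hre]
  calc l2norm σ (x+y) = Real.sqrt ((σ (star (x+y) * (x+y))).re) := rfl
  _ ≤ Real.sqrt ((l2norm σ x + l2norm σ y)^2) := Real.sqrt_le_sqrt hb
  _ = l2norm σ x + l2norm σ y :=
      Real.sqrt_sq (add_nonneg (l2_nonneg x) (l2_nonneg y))

lemma l2_sum (hσ1 : σ (1:A) = 1)
    (hfa : ∀ a : A, a ≠ 0 → 0 < (σ (star a * a)).re ∧ (σ (star a * a)).im = 0)
    {ι : Type*} (s : Finset ι) (f : ι → A) :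
    l2norm σ (∑ i ∈ s, f i) ≤ ∑ i ∈ s, l2norm σ (f i) := by
  induction s using Finset.cons_induction with
  | empty => simp [l2_zero]
  | cons a s ha ih =>
      rw [Finset.sum_cons, Finset.sum_cons]
      exact le_trans (l2_add hσ1 hfa _ _) (add_le_add_right ih _)

lemma Ediff_subset {n : ℕ} {x : A} (hx : x ∈ Ediff σ F n) : x ∈ F n := by
  cases n with
  | zero => exact hx
  | succ n => exact hx.1

lemma orth_lt (hmono : Monotone F) {m n : ℕ} (hmn : m < n) {u v : A}
    (hu : u ∈ Ediff σ F m) (hv : v ∈ Ediff σ F n) : σ (star u * v) = 0 := by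
  obtain ⟨n', rfl⟩ : ∃ n', n = n' + 1 := ⟨n - 1, by omega⟩
  exact hv.2 u (hmono (by omega : m ≤ n') (Ediff_subset hu))

lemma orth (hσ1 : σ (1:A) = 1)
    (hfa : ∀ a : A, a ≠ 0 → 0 < (σ (star a * a)).re ∧ (σ (star a * a)).im = 0)
    (hmono : Monotone F) {m n : ℕ} (hmn : m ≠ n) {u v : A}
    (hu : u ∈ Ediff σ F m) (hv : v ∈ Ediff σ F n) : σ (star u * v) = 0 := by
  rcases lt_or_gt_of_ne hmn with h | h
  · exact orth_lt hmono h hu hv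
  · rw [hermit hσ1 hfa, orth_lt hmono h hv hu, map_zero]

lemma pyth_sum (hσ1 : σ (1:A) = 1)
    (hfa : ∀ a : A, a ≠ 0 → 0 < (σ (star a * a)).re ∧ (σ (star a * a)).im = 0)
    (hmono : Monotone F) (s : Finset ℕ) (v : ℕ → A)
    (hv : ∀ n ∈ s, v n ∈ Ediff σ F n) :
    (σ (star (∑ n ∈ s, v n) * (∑ n ∈ s, v n))).re
      = ∑ n ∈ s, (σ (star (v n) * v n)).re := by
  rw [star_sum, Finset.sum_mul_sum]
  rw [map_sum, Complex.re_sum]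
  apply Finset.sum_congr rfl
  intro i hi
  rw [map_sum, Complex.re_sum]
  rw [Finset.sum_eq_single_of_mem i hi]
  intro j hj hji
  rw [orth hσ1 hfa hmono (Ne.symm hji) (hv i hi) (hv j hj)]
  simp

lemma Pzero (hproj : IsProjFamily σ F P) {N : ℕ} {x : A} (hx : x ∈ F N)
    {m : ℕ} (hm : N < m) : P m x = 0 := by
  obtain ⟨hmem, hfix, hkill, hdec⟩ := hproj
  have hx' := hdec N x hx
  calc P m x = P m (∑ n ∈ Finset.range (N+1), P n x) := by rw [← hx']
  _ = ∑ n ∈ Finset.range (N+1), P m (P n x) := map_sum _ _ _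
  _ = 0 := Finset.sum_eq_zero (fun n hn => by
      exact hkill n m (by simp at hn; omega) _ (hmem n x))

lemma pyth (hσ1 : σ (1:A) = 1)
    (hfa : ∀ a : A, a ≠ 0 → 0 < (σ (star a * a)).re ∧ (σ (star a * a)).im = 0)
    (hmono : Monotone F) (hproj : IsProjFamily σ F P) {N : ℕ} {x : A} (hx : x ∈ F N) :
    (σ (star x * x)).re = ∑ n ∈ Finset.range (N+1), (σ (star (P n x) * P n x)).re := by
  have hd := hproj.2.2.2 N x hx
  conv_lhs => rw [hd]
  exact pyth_sum hσ1 hfa hmono _ _ (fun n _ => hproj.1 n x)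

lemma ip_self_proj (hσ1 : σ (1:A) = 1)
    (hfa : ∀ a : A, a ≠ 0 → 0 < (σ (star a * a)).re ∧ (σ (star a * a)).im = 0)
    (hmono : Monotone F) (hproj : IsProjFamily σ F P) {N : ℕ} {x : A} (hx : x ∈ F N)
    (m : ℕ) : σ (star (P m x) * x) = σ (star (P m x) * P m x) := by
  by_cases hm : m < N + 1
  · have hd := hproj.2.2.2 N x hx
    have hwmem : P m x ∈ Ediff σ F m := hproj.1 m x
    obtain ⟨w, hw⟩ : ∃ w, P m x = w := ⟨_, rfl⟩
    rw [hw] at hwmem ⊢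
    conv_lhs => rw [hd]
    rw [Finset.mul_sum]
    rw [map_sum σ (fun n => star w * P n x) (Finset.range (N+1))]
    rw [Finset.sum_eq_single_of_mem m (Finset.mem_range.2 hm)]
    · rw [hw]
    · intro n hn hne
      exact orth hσ1 hfa hmono (Ne.symm hne) hwmem (hproj.1 n x)
  · have h0 : P m x = 0 := Pzero hproj hx (by omega)
    simp [h0]

lemma vanish (hσ1 : σ (1:A) = 1)
    (hfa : ∀ a : A, a ≠ 0 → 0 < (σ (star a * a)).re ∧ (σ (star a * a)).im = 0)
    (hmono : Monotone F)
    (hstarF : ∀ n, ∀ a ∈ F n, star a ∈ F n)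
    (hmulF : ∀ m n : ℕ, ∀ a ∈ F m, ∀ b ∈ F n, a * b ∈ F (m + n))
    (hproj : IsProjFamily σ F P) {k n m : ℕ} {u v : A}
    (hu : u ∈ Ediff σ F k) (hv : v ∈ Ediff σ F n)
    (h : ¬(m ≤ k + n ∧ n ≤ k + m)) : P m (u * v) = 0 := by
  have hw : u * v ∈ F (k + n) := hmulF k n u (Ediff_subset hu) v (Ediff_subset hv)
  rcases not_and_or.1 h with h1 | h2
  · exact Pzero hproj hw (by omega)
  · -- n > k + m
    have hkm : k + m < n := by omega
    obtain ⟨n', rfl⟩ : ∃ n', n = n' + 1 := ⟨n - 1, by omega⟩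
    have hq : σ (star (P m (u * v)) * P m (u * v)) = 0 := by
      rw [← ip_self_proj hσ1 hfa hmono hproj hw m]
      have e : star (P m (u * v)) * (u * v) = star (star u * P m (u * v)) * v := by
        rw [star_mul, star_star]; noncomm_ring
      rw [e]
      refine hv.2 _ ?_
      have hy : star u * P m (u * v) ∈ F (k + m) :=
        hmulF k m (star u) (hstarF k u (Ediff_subset hu)) _ (Ediff_subset (hproj.1 m (u*v)))
      exact hmono (by omega : k + m ≤ n') hy
    by_contra hne
    have hpos := (hfa _ hne).1
    rw [hq] at hpos
    simp at hpos

lemma swap_bound {k M : ℕ} (g : ℕ → ℝ) (hg : ∀ n, 0 ≤ g n) :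
    ∑ m ∈ Finset.range (k+M+1), ∑ n ∈
        (Finset.range (M+1)).filter (fun n => m ≤ k + n ∧ n ≤ k + m), g n
      ≤ (2*(k:ℝ)+1) * ∑ n ∈ Finset.range (M+1), g n := by
  have e1 : ∀ m, ∑ n ∈ (Finset.range (M+1)).filter (fun n => m ≤ k + n ∧ n ≤ k + m), g n
      = ∑ n ∈ Finset.range (M+1), if m ≤ k + n ∧ n ≤ k + m then g n else 0 := fun m =>
    (Finset.sum_filter _ _)
  simp only [e1]
  rw [Finset.sum_comm]
  have e2 : ∀ n : ℕ, ∑ m ∈ Finset.range (k+M+1), (if m ≤ k + n ∧ n ≤ k + m then g n else 0)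
      ≤ (2*(k:ℝ)+1) * g n := by
    intro n
    rw [← Finset.sum_filter]
    rw [Finset.sum_const]
    have hcard : ((Finset.range (k+M+1)).filter (fun m => m ≤ k + n ∧ n ≤ k + m)).card
        ≤ 2*k+1 := by
      have hsub : (Finset.range (k+M+1)).filter (fun m => m ≤ k + n ∧ n ≤ k + m)
          ⊆ Finset.Icc (n - k) (n + k) := by
        intro m hm
        simp only [Finset.mem_filter, Finset.mem_range] at hm
        simp only [Finset.mem_Icc]
        omega
      calc ((Finset.range (k+M+1)).filter (fun m => m ≤ k + n ∧ n ≤ k + m)).card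
          ≤ (Finset.Icc (n - k) (n + k)).card := Finset.card_le_card hsub
      _ = n + k + 1 - (n - k) := Nat.card_Icc _ _
      _ ≤ 2*k+1 := by omega
    rw [nsmul_eq_mul]
    apply mul_le_mul_of_nonneg_right _ (hg n)
    calc ((((Finset.range (k+M+1)).filter (fun m => m ≤ k + n ∧ n ≤ k + m)).card : ℕ) : ℝ)
        ≤ ((2*k+1 : ℕ) : ℝ) := by exact_mod_cast hcard
    _ = 2*(k:ℝ)+1 := by push_cast; ring
  calc ∑ n ∈ Finset.range (M+1), ∑ m ∈ Finset.range (k+M+1),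
        (if m ≤ k + n ∧ n ≤ k + m then g n else 0)
      ≤ ∑ n ∈ Finset.range (M+1), (2*(k:ℝ)+1) * g n := Finset.sum_le_sum (fun n _ => e2 n)
  _ = (2*(k:ℝ)+1) * ∑ n ∈ Finset.range (M+1), g n := (Finset.mul_sum _ _ _).symm

lemma Cnn (hF0 : F 0 = Submodule.span ℂ {1}) (hσ1 : σ (1:A) = 1)
    {C : ℝ} (hHaag : HaagerupTypeCond σ F P C) : 0 ≤ C := by
  have h1 : (1:A) ∈ Ediff σ F 0 := by
    show (1:A) ∈ F 0
    rw [hF0]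
    exact Submodule.mem_span_singleton_self 1
  have h := hHaag 0 0 0 1 h1 1 h1
  have hone : l2norm σ (1:A) = 1 := by
    simp [l2norm, hσ1]
  rw [hone] at h
  have h0 : 0 ≤ l2norm σ (P 0 ((1:A) * 1)) := Real.sqrt_nonneg _
  nlinarith [h, h0]

lemma step1 (hσ1 : σ (1:A) = 1)
    (hfa : ∀ a : A, a ≠ 0 → 0 < (σ (star a * a)).re ∧ (σ (star a * a)).im = 0)
    (hmono : Monotone F)
    (hstarF : ∀ n, ∀ a ∈ F n, star a ∈ F n)
    (hmulF : ∀ m n : ℕ, ∀ a ∈ F m, ∀ b ∈ F n, a * b ∈ F (m + n))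
    (hproj : IsProjFamily σ F P) {C : ℝ} (hHaag : HaagerupTypeCond σ F P C)
    (hC : 0 ≤ C) {k M : ℕ} {ak ξ : A} (hak : ak ∈ Ediff σ F k) (hξ : ξ ∈ F M) :
    l2norm σ (ak * ξ) ≤ C * (2*(k:ℝ)+1) * l2norm σ ak * l2norm σ ξ := by
  have hakF : ak ∈ F k := Ediff_subset hak
  have hw : ak * ξ ∈ F (k + M) := hmulF k M ak hakF ξ hξ
  have hdecξ := hproj.2.2.2 M ξ hξ
  have hcomp : ∀ m : ℕ, (l2norm σ (P m (ak * ξ)))^2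
      ≤ (C * l2norm σ ak)^2 * ((2*(k:ℝ)+1) *
          ∑ n ∈ (Finset.range (M+1)).filter (fun n => m ≤ k + n ∧ n ≤ k + m),
            (l2norm σ (P n ξ))^2) := by
    intro m
    set J := (Finset.range (M+1)).filter (fun n => m ≤ k + n ∧ n ≤ k + m) with hJ
    have hPm : P m (ak * ξ) = ∑ n ∈ Finset.range (M+1), P m (ak * P n ξ) := by
      conv_lhs => rw [hdecξ]
      rw [Finset.mul_sum, map_sum]
    have htri : l2norm σ (P m (ak * ξ))
        ≤ ∑ n ∈ Finset.range (M+1), l2norm σ (P m (ak * P n ξ)) := by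
      rw [hPm]; exact l2_sum hσ1 hfa _ _
    have hterm : ∀ n ∈ Finset.range (M+1), l2norm σ (P m (ak * P n ξ))
        ≤ if m ≤ k + n ∧ n ≤ k + m then C * l2norm σ ak * l2norm σ (P n ξ) else 0 := by
      intro n _
      by_cases hcond : m ≤ k + n ∧ n ≤ k + m
      · rw [if_pos hcond]
        exact hHaag k m n ak hak (P n ξ) (hproj.1 n ξ)
      · rw [if_neg hcond]
        rw [vanish hσ1 hfa hmono hstarF hmulF hproj hak (hproj.1 n ξ) hcond]
        rw [l2_zero]
    have h3 : l2norm σ (P m (ak * ξ)) ≤ C * l2norm σ ak * ∑ n ∈ J, l2norm σ (P n ξ) := by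
      rw [Finset.mul_sum]
      refine le_trans htri (le_trans (Finset.sum_le_sum hterm) ?_)
      rw [hJ, Finset.sum_filter]
    have h4 : (l2norm σ (P m (ak * ξ)))^2
        ≤ (C * l2norm σ ak)^2 * (∑ n ∈ J, l2norm σ (P n ξ))^2 := by
      calc (l2norm σ (P m (ak * ξ)))^2
          ≤ (C * l2norm σ ak * ∑ n ∈ J, l2norm σ (P n ξ))^2 :=
            pow_le_pow_left₀ (l2_nonneg _) h3 2
      _ = _ := by ring
    have hcs : (∑ n ∈ J, l2norm σ (P n ξ))^2
        ≤ (J.card : ℝ) * ∑ n ∈ J, (l2norm σ (P n ξ))^2 :=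
      sq_sum_le_card_mul_sum_sq
    have hcard : (J.card : ℝ) ≤ 2*(k:ℝ)+1 := by
      have hsub : J ⊆ Finset.Icc (m - k) (m + k) := by
        intro n hn
        simp only [hJ, Finset.mem_filter, Finset.mem_range] at hn
        simp only [Finset.mem_Icc]
        omega
      have hc := Finset.card_le_card hsub
      rw [Nat.card_Icc] at hc
      have hc2 : J.card ≤ 2*k+1 := by omega
      calc (J.card : ℝ) ≤ ((2*k+1 : ℕ) : ℝ) := by exact_mod_cast hc2
      _ = 2*(k:ℝ)+1 := by push_cast; ring
    have hsqnn : (0:ℝ) ≤ ∑ n ∈ J, (l2norm σ (P n ξ))^2 :=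
      Finset.sum_nonneg (fun n _ => sq_nonneg _)
    calc (l2norm σ (P m (ak * ξ)))^2
        ≤ (C * l2norm σ ak)^2 * (∑ n ∈ J, l2norm σ (P n ξ))^2 := h4
    _ ≤ (C * l2norm σ ak)^2 * ((J.card : ℝ) * ∑ n ∈ J, (l2norm σ (P n ξ))^2) :=
        mul_le_mul_of_nonneg_left hcs (sq_nonneg _)
    _ ≤ (C * l2norm σ ak)^2 * ((2*(k:ℝ)+1) * ∑ n ∈ J, (l2norm σ (P n ξ))^2) := by
        apply mul_le_mul_of_nonneg_left _ (sq_nonneg _)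
        exact mul_le_mul_of_nonneg_right hcard hsqnn
  -- sum over m
  have hpy : (σ (star (ak * ξ) * (ak * ξ))).re
      = ∑ m ∈ Finset.range (k+M+1), (σ (star (P m (ak * ξ)) * P m (ak * ξ))).re :=
    pyth hσ1 hfa hmono hproj hw
  have hq : (l2norm σ (ak * ξ))^2
      ≤ (C * l2norm σ ak)^2 * (2*(k:ℝ)+1) * ((2*(k:ℝ)+1) * (l2norm σ ξ)^2) := by
    have h1 : (l2norm σ (ak * ξ))^2
        = ∑ m ∈ Finset.range (k+M+1), (l2norm σ (P m (ak * ξ)))^2 := by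
      rw [l2_sq hfa, hpy]
      exact Finset.sum_congr rfl (fun m _ => (l2_sq hfa _).symm)
    have h2 : ∑ m ∈ Finset.range (k+M+1), (l2norm σ (P m (ak * ξ)))^2
        ≤ (C * l2norm σ ak)^2 * (2*(k:ℝ)+1) *
            ∑ m ∈ Finset.range (k+M+1),
              ∑ n ∈ (Finset.range (M+1)).filter (fun n => m ≤ k + n ∧ n ≤ k + m),
                (l2norm σ (P n ξ))^2 := by
      rw [Finset.mul_sum]
      refine Finset.sum_le_sum (fun m _ => ?_)
      calc (l2norm σ (P m (ak * ξ)))^2 ≤ _ := hcomp m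
      _ = _ := by ring
    have h3 := swap_bound (k := k) (M := M) (fun n => (l2norm σ (P n ξ))^2)
        (fun n => sq_nonneg _)
    have h4 : ∑ n ∈ Finset.range (M+1), (l2norm σ (P n ξ))^2 = (l2norm σ ξ)^2 := by
      rw [l2_sq hfa ξ, pyth hσ1 hfa hmono hproj hξ]
      exact Finset.sum_congr rfl (fun n _ => l2_sq hfa _)
    have hnn : (0:ℝ) ≤ (C * l2norm σ ak)^2 * (2*(k:ℝ)+1) := by positivity
    calc (l2norm σ (ak * ξ))^2
        = ∑ m ∈ Finset.range (k+M+1), (l2norm σ (P m (ak * ξ)))^2 := h1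
    _ ≤ (C * l2norm σ ak)^2 * (2*(k:ℝ)+1) *
          ∑ m ∈ Finset.range (k+M+1),
            ∑ n ∈ (Finset.range (M+1)).filter (fun n => m ≤ k + n ∧ n ≤ k + m),
              (l2norm σ (P n ξ))^2 := h2
    _ ≤ (C * l2norm σ ak)^2 * (2*(k:ℝ)+1) *
          ((2*(k:ℝ)+1) * ∑ n ∈ Finset.range (M+1), (l2norm σ (P n ξ))^2) :=
        mul_le_mul_of_nonneg_left h3 hnn
    _ = (C * l2norm σ ak)^2 * (2*(k:ℝ)+1) * ((2*(k:ℝ)+1) * (l2norm σ ξ)^2) := by rw [h4]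
  have hRnn : 0 ≤ C * (2*(k:ℝ)+1) * l2norm σ ak * l2norm σ ξ := by
    have := l2_nonneg (σ := σ) ak
    have := l2_nonneg (σ := σ) ξ
    positivity
  have hq2 : (l2norm σ (ak * ξ))^2 ≤ (C * (2*(k:ℝ)+1) * l2norm σ ak * l2norm σ ξ)^2 := by
    calc (l2norm σ (ak * ξ))^2
        ≤ (C * l2norm σ ak)^2 * (2*(k:ℝ)+1) * ((2*(k:ℝ)+1) * (l2norm σ ξ)^2) := hq
    _ = (C * (2*(k:ℝ)+1) * l2norm σ ak * l2norm σ ξ)^2 := by ring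
  calc l2norm σ (ak * ξ) = Real.sqrt ((l2norm σ (ak * ξ))^2) :=
        (Real.sqrt_sq (l2_nonneg _)).symm
  _ ≤ Real.sqrt ((C * (2*(k:ℝ)+1) * l2norm σ ak * l2norm σ ξ)^2) := Real.sqrt_le_sqrt hq2
  _ = C * (2*(k:ℝ)+1) * l2norm σ ak * l2norm σ ξ := Real.sqrt_sq hRnn

end Haag5

/-- Under the Haagerup-type condition with constant `C`, with
`C' = 2C(Σ_{p≥1} p^{-2})^{1/2}`, every `a ∈ A` satisfies the Haagerup inequality
`‖a‖ ≤ C'(Σ_k (1+k)⁴ ‖a_k‖₂²)^{1/2}` (operator norm expressed by testing against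
arbitrary vectors `ξ ∈ A`). -/
theorem stmt_5 (σ : A →ₗ[ℂ] ℂ) (F : ℕ → Submodule ℂ A) (P : ℕ → A →ₗ[ℂ] A) (C : ℝ)
    (hfilt : IsFilteredStarAlgWithState σ F)
    (hproj : IsProjFamily σ F P)
    (hHaag : HaagerupTypeCond σ F P C) :
    ∀ (a ξ : A),
      l2norm σ (a * ξ) ≤
        (2 * C * Real.sqrt (∑' p : ℕ, (((p : ℝ) + 1) ^ 2)⁻¹)) *
          Real.sqrt (∑' k : ℕ, (1 + (k : ℝ)) ^ 4 * (l2norm σ (P k a)) ^ 2) *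
          l2norm σ ξ := by
  obtain ⟨hmono, hexh, hstarF, hmulF, hF0, hfin, hσ1, hfa, htrace⟩ := hfilt
  intro a ξ
  have hC : 0 ≤ C := Haag5.Cnn hF0 hσ1 hHaag
  obtain ⟨N, haN⟩ := hexh a
  obtain ⟨M, hξM⟩ := hexh ξ
  have hdeca := hproj.2.2.2 N a haN
  -- Step 2: triangle inequality over the components of a
  have hstep2 : l2norm σ (a * ξ)
      ≤ C * l2norm σ ξ * ∑ k ∈ Finset.range (N+1), (2*(k:ℝ)+1) * l2norm σ (P k a) := by
    have e : a * ξ = ∑ k ∈ Finset.range (N+1), (P k a) * ξ := by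
      conv_lhs => rw [hdeca]
      rw [Finset.sum_mul]
    calc l2norm σ (a * ξ) ≤ ∑ k ∈ Finset.range (N+1), l2norm σ ((P k a) * ξ) := by
          rw [e]; exact Haag5.l2_sum hσ1 hfa _ _
    _ ≤ ∑ k ∈ Finset.range (N+1), C * (2*(k:ℝ)+1) * l2norm σ (P k a) * l2norm σ ξ :=
        Finset.sum_le_sum (fun k _ =>
          Haag5.step1 hσ1 hfa hmono hstarF hmulF hproj hHaag hC (hproj.1 k a) hξM)
    _ = C * l2norm σ ξ * ∑ k ∈ Finset.range (N+1), (2*(k:ℝ)+1) * l2norm σ (P k a) := by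
        rw [Finset.mul_sum]
        exact Finset.sum_congr rfl (fun k _ => by ring)
  -- Cauchy-Schwarz on the k-sum
  set u : ℕ → ℝ := fun k => l2norm σ (P k a) with hu
  set f : ℕ → ℝ := fun k => (2*(k:ℝ)+1) * ((1+(k:ℝ))^2)⁻¹ with hf
  set g : ℕ → ℝ := fun k => (1+(k:ℝ))^2 * u k with hg
  have hunn : ∀ k, 0 ≤ u k := fun k => Real.sqrt_nonneg _
  have hfg : ∀ k : ℕ, f k * g k = (2*(k:ℝ)+1) * u k := by
    intro k
    have h1 : (1+(k:ℝ)) ≠ 0 := by positivity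
    simp only [hf, hg]
    field_simp
  have hT1sum : Summable (fun p:ℕ => (((p:ℝ)+1)^2)⁻¹) := by
    have h0 : Summable (fun n:ℕ => 1 / (n:ℝ)^2) :=
      Real.summable_one_div_nat_pow.mpr one_lt_two
    have h1 := (summable_nat_add_iff 1).mpr h0
    refine h1.congr (fun n => ?_)
    push_cast
    rw [one_div]
  have hT2sum : Summable (fun k:ℕ => (1+(k:ℝ))^4 * (l2norm σ (P k a))^2) := by
    apply summable_of_ne_finset_zero (s := Finset.range (N+1))
    intro k hk
    have h0 : P k a = 0 := Haag5.Pzero hproj haN (by simpa using hk)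
    simp [h0, l2norm]
  set T1 := ∑' p:ℕ, (((p:ℝ)+1)^2)⁻¹ with hT1
  set T2 := ∑' k:ℕ, (1+(k:ℝ))^4 * (l2norm σ (P k a))^2 with hT2
  have hT1nn : 0 ≤ T1 := tsum_nonneg (fun p => by positivity)
  have hT2nn : 0 ≤ T2 := tsum_nonneg (fun k => by positivity)
  have hb1 : ∑ k ∈ Finset.range (N+1), (f k)^2 ≤ 4 * T1 := by
    have hterm : ∀ k:ℕ, (f k)^2 ≤ 4 * (((k:ℝ)+1)^2)⁻¹ := by
      intro k
      have hk : (0:ℝ) < 1 + k := by positivity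
      have key : (2*(k:ℝ)+1)^2 ≤ 4 * (1+(k:ℝ))^2 := by nlinarith [Nat.cast_nonneg (α := ℝ) k]
      calc (f k)^2 = (2*(k:ℝ)+1)^2 * (((1+(k:ℝ))^2)⁻¹)^2 := by simp only [hf]; ring
      _ ≤ (4 * (1+(k:ℝ))^2) * (((1+(k:ℝ))^2)⁻¹)^2 :=
          mul_le_mul_of_nonneg_right key (by positivity)
      _ = 4 * (((k:ℝ)+1)^2)⁻¹ := by
          field_simp
          ring
    calc ∑ k ∈ Finset.range (N+1), (f k)^2
        ≤ ∑ k ∈ Finset.range (N+1), 4 * (((k:ℝ)+1)^2)⁻¹ :=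
          Finset.sum_le_sum (fun k _ => hterm k)
    _ = 4 * ∑ k ∈ Finset.range (N+1), (((k:ℝ)+1)^2)⁻¹ := (Finset.mul_sum _ _ _).symm
    _ ≤ 4 * T1 := by
        apply mul_le_mul_of_nonneg_left _ (by norm_num : (0:ℝ) ≤ 4)
        exact Summable.sum_le_tsum _ (fun i _ => by positivity) hT1sum
  have hb2 : ∑ k ∈ Finset.range (N+1), (g k)^2 ≤ T2 := by
    have he : ∀ k:ℕ, (g k)^2 = (1+(k:ℝ))^4 * (l2norm σ (P k a))^2 := by
      intro k
      simp only [hg, hu]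
      ring
    calc ∑ k ∈ Finset.range (N+1), (g k)^2
        = ∑ k ∈ Finset.range (N+1), (1+(k:ℝ))^4 * (l2norm σ (P k a))^2 :=
          Finset.sum_congr rfl (fun k _ => he k)
    _ ≤ T2 := Summable.sum_le_tsum _ (fun i _ => by positivity) hT2sum
  have hSnn : (0:ℝ) ≤ ∑ k ∈ Finset.range (N+1), (2*(k:ℝ)+1) * u k :=
    Finset.sum_nonneg (fun k _ => mul_nonneg (by positivity) (hunn k))
  have hS : ∑ k ∈ Finset.range (N+1), (2*(k:ℝ)+1) * u k
      ≤ 2 * Real.sqrt T1 * Real.sqrt T2 := by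
    have hcs := Finset.sum_mul_sq_le_sq_mul_sq (Finset.range (N+1)) f g
    have h1 : (∑ k ∈ Finset.range (N+1), (2*(k:ℝ)+1) * u k)^2 ≤ (4*T1) * T2 := by
      calc (∑ k ∈ Finset.range (N+1), (2*(k:ℝ)+1) * u k)^2
          = (∑ k ∈ Finset.range (N+1), f k * g k)^2 := by
            rw [Finset.sum_congr rfl (fun k _ => (hfg k).symm)]
      _ ≤ (∑ k ∈ Finset.range (N+1), (f k)^2) * ∑ k ∈ Finset.range (N+1), (g k)^2 := hcs
      _ ≤ (4*T1) * T2 := by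
          apply mul_le_mul hb1 hb2 (Finset.sum_nonneg (fun k _ => sq_nonneg _)) (by positivity)
    calc ∑ k ∈ Finset.range (N+1), (2*(k:ℝ)+1) * u k
        = Real.sqrt ((∑ k ∈ Finset.range (N+1), (2*(k:ℝ)+1) * u k)^2) :=
          (Real.sqrt_sq hSnn).symm
    _ ≤ Real.sqrt ((4*T1) * T2) := Real.sqrt_le_sqrt h1
    _ = Real.sqrt (4*T1) * Real.sqrt T2 := Real.sqrt_mul (by positivity) _
    _ = 2 * Real.sqrt T1 * Real.sqrt T2 := by
        rw [show (4:ℝ)*T1 = (2:ℝ)^2 * T1 by ring, Real.sqrt_mul (by positivity) T1,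
          Real.sqrt_sq (by norm_num : (0:ℝ) ≤ 2)]
  calc l2norm σ (a * ξ)
      ≤ C * l2norm σ ξ * ∑ k ∈ Finset.range (N+1), (2*(k:ℝ)+1) * u k := hstep2
  _ ≤ C * l2norm σ ξ * (2 * Real.sqrt T1 * Real.sqrt T2) :=
      mul_le_mul_of_nonneg_left hS (mul_nonneg hC (Real.sqrt_nonneg _))
  _ = (2 * C * Real.sqrt T1) * Real.sqrt T2 * l2norm σ ξ := by ring
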